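/- (Stability of Open Proportional Dynamic Consensus.) Let ε > 0, α ∈ (0, 1/2) and β > 1 − α. Let {V_k}_{k≥0} be a sequence of nonempty finite sets of integers with |V_{k+1}| ≥ β² · |V_k| for all k, let G_k be a simple graph on V_k with maximum degree at most 1/(2ε) and graph Laplacian L_k, and let u_k : V_k → ℝ be inputs. Let λ̄² ≥ 0 satisfy wᵀ L_k w ≥ λ̄² ‖w‖² for all k and all w : V_k → ℝ with Σ_v w_v = 0. Let ū_k denote the constant vector of the average of u_k over V_k and û_k = u_k − ū_k, and assume ‖û_k‖_∞ ≤ Π for all k and d(ū_{k+1}, ū_k) ≤ sqrt(|V_{k+1}|) · U for all k. Define the state sequence x_k : V_k → ℝ by: x_{k+1,v} = x_{k,v} − α(x_{k,v} − u_{k,v}) − ε Σ_{w adjacent to v in G_k} (x_{k,v} − x_{k,w}) for v ∈ V_k ∩ V_{k+1}, and x_{k+1,v} = u_{k+1,v} for v ∈ V_{k+1} \ V_k. Let xᵉ_k = (αI + εL_k)⁻¹ (α u_k). Then the trajectory of points of interest {xᵉ_k} is open stable with stability radius R = ( (1 + 2/(1 + (ε/α)λ̄²) + (1/β)·(1/(1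 + (ε/α)λ̄²))) Π + U ) / ( 1 − (1−α)/β ): for every ε' > R there exists δ > 0 such that if d(x_0, xᵉ_0)/sqrt(|V_0|) < δ then d(x_k, xᵉ_k)/sqrt(|V_k|) < ε' for every k ≥ 0. -/

import Mathlib

open Finset

/-- The open distance between two vectors `x : V₁ → ℝ` and `y : V₂ → ℝ`
(encoded as functions `ℤ → ℝ` together with their index sets `V₁, V₂`). -/
noncomputable def openDist (V₁ V₂ : Finset ℤ) (x y : ℤ → ℝ) : ℝ :=
  Real.sqrt ((∑ v ∈ V₁ ∩ V₂, (x v - y v) ^ 2) +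
    (∑ v ∈ V₁ \ V₂, (x v) ^ 2) + (∑ v ∈ V₂ \ V₁, (y v) ^ 2))


/-- Triangle inequality for finset ℓ² norms. -/
private lemma enorm_triangle (s : Finset ℤ) (f g : ℤ → ℝ) :
    Real.sqrt (∑ v ∈ s, (f v + g v) ^ 2) ≤
      Real.sqrt (∑ v ∈ s, f v ^ 2) + Real.sqrt (∑ v ∈ s, g v ^ 2) := by
  have hf : (0:ℝ) ≤ ∑ v ∈ s, f v ^ 2 := Finset.sum_nonneg fun _ _ => sq_nonneg _
  have hg : (0:ℝ) ≤ ∑ v ∈ s, g v ^ 2 := Finset.sum_nonneg fun _ _ => sq_nonneg _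
  have cs := Real.sum_mul_le_sqrt_mul_sqrt s f g
  have hexp : ∑ v ∈ s, (f v + g v) ^ 2 =
      (∑ v ∈ s, f v ^ 2) + 2 * (∑ v ∈ s, f v * g v) + ∑ v ∈ s, g v ^ 2 := by
    rw [Finset.mul_sum, ← Finset.sum_add_distrib, ← Finset.sum_add_distrib]
    exact Finset.sum_congr rfl fun v _ => by ring
  have key : ∑ v ∈ s, (f v + g v) ^ 2 ≤
      (Real.sqrt (∑ v ∈ s, f v ^ 2) + Real.sqrt (∑ v ∈ s, g v ^ 2)) ^ 2 := by
    rw [hexp]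
    nlinarith [Real.sq_sqrt hf, Real.sq_sqrt hg, Real.sqrt_nonneg (∑ v ∈ s, f v ^ 2),
      Real.sqrt_nonneg (∑ v ∈ s, g v ^ 2)]
  calc Real.sqrt (∑ v ∈ s, (f v + g v) ^ 2)
      ≤ Real.sqrt ((Real.sqrt (∑ v ∈ s, f v ^ 2) + Real.sqrt (∑ v ∈ s, g v ^ 2)) ^ 2) :=
        Real.sqrt_le_sqrt key
    _ = _ := Real.sqrt_sq (by positivity)

/-- Swapping a symmetric neighborhood double sum. -/
private lemma sum_nbr_swap (Vk : Finset ℤ) (Nk : ℤ → Finset ℤ)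
    (hsub : ∀ v, Nk v ⊆ Vk) (hsymm : ∀ v w, w ∈ Nk v ↔ v ∈ Nk w) (g : ℤ → ℤ → ℝ) :
    ∑ v ∈ Vk, ∑ z ∈ Nk v, g v z = ∑ v ∈ Vk, ∑ z ∈ Nk v, g z v := by
  have hmem : ∀ v z : ℤ, (z ∈ Nk v) = (v ∈ Nk z) := fun v z => propext (hsymm v z)
  calc ∑ v ∈ Vk, ∑ z ∈ Nk v, g v z
      = ∑ v ∈ Vk, ∑ z ∈ Vk, if z ∈ Nk v then g v z else 0 := by
        refine Finset.sum_congr rfl fun v _ => ?_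
        rw [Finset.sum_ite_mem, Finset.inter_eq_right.2 (hsub v)]
    _ = ∑ z ∈ Vk, ∑ v ∈ Vk, if z ∈ Nk v then g v z else 0 := Finset.sum_comm
    _ = ∑ z ∈ Vk, ∑ v ∈ Vk, if v ∈ Nk z then g v z else 0 := by
        simp_rw [hmem]
    _ = ∑ z ∈ Vk, ∑ v ∈ Nk z, g v z := by
        refine Finset.sum_congr rfl fun z _ => ?_
        rw [Finset.sum_ite_mem, Finset.inter_eq_right.2 (hsub z)]
    _ = ∑ v ∈ Vk, ∑ z ∈ Nk v, g z v := rfl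

/-- The Laplacian double sum of any function vanishes. -/
private lemma sum_lap_zero (Vk : Finset ℤ) (Nk : ℤ → Finset ℤ)
    (hsub : ∀ v, Nk v ⊆ Vk) (hsymm : ∀ v w, w ∈ Nk v ↔ v ∈ Nk w) (f : ℤ → ℝ) :
    ∑ v ∈ Vk, ∑ z ∈ Nk v, (f v - f z) = 0 := by
  have h := sum_nbr_swap Vk Nk hsub hsymm (fun v z => f v - f z)
  have h2 : ∑ v ∈ Vk, ∑ z ∈ Nk v, (f z - f v)
      = - ∑ v ∈ Vk, ∑ z ∈ Nk v, (f v - f z) := by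
    rw [← Finset.sum_neg_distrib]
    refine Finset.sum_congr rfl fun v _ => ?_
    rw [← Finset.sum_neg_distrib]
    exact Finset.sum_congr rfl fun z _ => by ring
  rw [h2] at h
  linarith

/-- Contraction property of the update matrix `(1-α)I - εL`. -/
private lemma contraction (ε α : ℝ) (hε : 0 < ε) (hα : α < 1 / 2)
    (Vk : Finset ℤ) (Nk : ℤ → Finset ℤ)
    (hsub : ∀ v, Nk v ⊆ Vk) (hsymm : ∀ v w, w ∈ Nk v ↔ v ∈ Nk w)
    (hirr : ∀ v, v ∉ Nk v)
    (hdeg : ∀ v ∈ Vk, ((Nk v).card : ℝ) ≤ 1 / (2 * ε))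
    (e : ℤ → ℝ) (S : Finset ℤ) (hS : S ⊆ Vk) :
    ∑ v ∈ S, ((1 - α) * e v - ε * ∑ z ∈ Nk v, (e v - e z)) ^ 2 ≤
      (1 - α) ^ 2 * ∑ v ∈ Vk, e v ^ 2 := by
  set M : ℤ → ℤ → ℝ := fun v z =>
    if z = v then 1 - α - ε * (Nk v).card else if z ∈ Nk v then ε else 0 with hM
  have hMnonneg : ∀ v ∈ Vk, ∀ z : ℤ, 0 ≤ M v z := by
    intro v hv z
    simp only [hM]
    by_cases h : z = v
    · rw [if_pos h]
      have hd := hdeg v hv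
      have : ε * ((Nk v).card : ℝ) ≤ 1 / 2 := by
        calc ε * ((Nk v).card : ℝ) ≤ ε * (1 / (2 * ε)) :=
              mul_le_mul_of_nonneg_left hd hε.le
          _ = 1 / 2 := by field_simp
      linarith
    · rw [if_neg h]
      by_cases h2 : z ∈ Nk v
      · rw [if_pos h2]; linarith
      · rw [if_neg h2]
  have hNsubE : ∀ v, Nk v ⊆ Vk.erase v := fun v z hz =>
    Finset.mem_erase.2 ⟨fun h => hirr v (h ▸ hz), hsub v hz⟩
  have hMrow : ∀ v ∈ Vk, ∑ z ∈ Vk, M v z = 1 - α := by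
    intro v hv
    rw [← Finset.sum_erase_add _ _ hv]
    have h1 : ∑ z ∈ Vk.erase v, M v z = ε * (Nk v).card := by
      have hcong : ∀ z ∈ Vk.erase v, M v z = if z ∈ Nk v then ε else 0 := by
        intro z hz
        simp only [hM, if_neg (Finset.mem_erase.1 hz).1]
      rw [Finset.sum_congr rfl hcong, Finset.sum_ite_mem,
        Finset.inter_eq_right.2 (hNsubE v), Finset.sum_const, nsmul_eq_mul, mul_comm]
    have h2 : M v v = 1 - α - ε * (Nk v).card := by simp [hM]
    rw [h1, h2]; ring
  have hMsymm : ∀ v z : ℤ, M v z = M z v := by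
    intro v z
    by_cases h : z = v
    · subst h; rfl
    · have h' : ¬v = z := fun hh => h hh.symm
      simp only [hM, if_neg h, if_neg h']
      by_cases h2 : z ∈ Nk v
      · rw [if_pos h2, if_pos ((hsymm v z).1 h2)]
      · rw [if_neg h2, if_neg fun hh => h2 ((hsymm v z).2 hh)]
  have hMe : ∀ v ∈ Vk,
      (1 - α) * e v - ε * ∑ z ∈ Nk v, (e v - e z) = ∑ z ∈ Vk, M v z * e z := by
    intro v hv
    rw [← Finset.sum_erase_add _ _ hv]
    have h1 : ∑ z ∈ Vk.erase v, M v z * e z = ε * ∑ z ∈ Nk v, e z := by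
      have hcong : ∀ z ∈ Vk.erase v, M v z * e z = if z ∈ Nk v then ε * e z else 0 := by
        intro z hz
        simp only [hM, if_neg (Finset.mem_erase.1 hz).1]
        by_cases h2 : z ∈ Nk v
        · simp [h2]
        · simp [h2]
      rw [Finset.sum_congr rfl hcong, Finset.sum_ite_mem,
        Finset.inter_eq_right.2 (hNsubE v), Finset.mul_sum]
    have h2 : M v v * e v = (1 - α - ε * (Nk v).card) * e v := by simp [hM]
    rw [h1, h2, Finset.sum_sub_distrib, Finset.sum_const, nsmul_eq_mul]
    ring
  have key : ∀ v ∈ Vk,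
      (∑ z ∈ Vk, M v z * e z) ^ 2 ≤ (1 - α) * ∑ z ∈ Vk, M v z * e z ^ 2 := by
    intro v hv
    have cs := Finset.sum_mul_sq_le_sq_mul_sq Vk (fun z => Real.sqrt (M v z))
      (fun z => Real.sqrt (M v z) * e z)
    have e1 : ∀ z ∈ Vk, Real.sqrt (M v z) * (Real.sqrt (M v z) * e z) = M v z * e z :=
      fun z _ => by rw [← mul_assoc, Real.mul_self_sqrt (hMnonneg v hv z)]
    have e2 : ∀ z ∈ Vk, Real.sqrt (M v z) ^ 2 = M v z :=
      fun z _ => Real.sq_sqrt (hMnonneg v hv z)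
    have e3 : ∀ z ∈ Vk, (Real.sqrt (M v z) * e z) ^ 2 = M v z * e z ^ 2 :=
      fun z _ => by rw [mul_pow, Real.sq_sqrt (hMnonneg v hv z)]
    rw [Finset.sum_congr rfl e1, Finset.sum_congr rfl e2, Finset.sum_congr rfl e3,
      hMrow v hv] at cs
    exact cs
  calc ∑ v ∈ S, ((1 - α) * e v - ε * ∑ z ∈ Nk v, (e v - e z)) ^ 2
      ≤ ∑ v ∈ Vk, ((1 - α) * e v - ε * ∑ z ∈ Nk v, (e v - e z)) ^ 2 :=
        Finset.sum_le_sum_of_subset_of_nonneg hS fun _ _ _ => sq_nonneg _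
    _ = ∑ v ∈ Vk, (∑ z ∈ Vk, M v z * e z) ^ 2 :=
        Finset.sum_congr rfl fun v hv => by rw [hMe v hv]
    _ ≤ ∑ v ∈ Vk, (1 - α) * ∑ z ∈ Vk, M v z * e z ^ 2 := Finset.sum_le_sum key
    _ = (1 - α) * ∑ v ∈ Vk, ∑ z ∈ Vk, M v z * e z ^ 2 := by rw [Finset.mul_sum]
    _ = (1 - α) * ∑ z ∈ Vk, ∑ v ∈ Vk, M v z * e z ^ 2 := by rw [Finset.sum_comm]
    _ = (1 - α) * ∑ z ∈ Vk, (1 - α) * e z ^ 2 := by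
        refine congrArg _ (Finset.sum_congr rfl fun z hz => ?_)
        rw [← Finset.sum_mul]
        have : ∑ v ∈ Vk, M v z = 1 - α := by
          rw [Finset.sum_congr rfl fun v _ => hMsymm v z]
          exact hMrow z hz
        rw [this]
    _ = (1 - α) ^ 2 * ∑ v ∈ Vk, e v ^ 2 := by rw [← Finset.mul_sum]; ring

/-- Tracking bound: the point of interest stays within `1/(1+(ε/α)λ̄²) √n Π` of consensus. -/
private lemma tracking (ε α lam2 Pi' : ℝ) (hε : 0 < ε) (hα0 : 0 < α) (hlam2 : 0 ≤ lam2)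
    (Vk : Finset ℤ) (hne : Vk.Nonempty) (Nk : ℤ → Finset ℤ)
    (hsub : ∀ v, Nk v ⊆ Vk) (hsymm : ∀ v w, w ∈ Nk v ↔ v ∈ Nk w)
    (uk xek : ℤ → ℝ)
    (hconn : ∀ w : ℤ → ℝ, (∑ v ∈ Vk, w v) = 0 →
      (∑ v ∈ Vk, w v * (∑ z ∈ Nk v, (w v - w z))) ≥ lam2 * ∑ v ∈ Vk, (w v) ^ 2)
    (hPi : ∀ v ∈ Vk, |uk v - (∑ z ∈ Vk, uk z) / (Vk.card : ℝ)| ≤ Pi')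
    (hxe : ∀ v ∈ Vk, α * xek v + ε * (∑ z ∈ Nk v, (xek v - xek z)) = α * uk v) :
    Real.sqrt (∑ v ∈ Vk, (xek v - (∑ z ∈ Vk, uk z) / (Vk.card : ℝ)) ^ 2) ≤
      1 / (1 + (ε / α) * lam2) * (Real.sqrt (Vk.card) * Pi') := by
  have hcard : (0:ℝ) < (Vk.card : ℝ) := by
    exact_mod_cast Finset.card_pos.2 hne
  set ub : ℝ := (∑ z ∈ Vk, uk z) / (Vk.card : ℝ) with hub
  set w : ℤ → ℝ := fun v => xek v - ub with hw
  have hPi0 : 0 ≤ Pi' := le_trans (abs_nonneg _) (hPi hne.choose hne.choose_spec)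
  have hc : 0 < 1 + (ε / α) * lam2 := by positivity
  have hK : 0 ≤ Real.sqrt (Vk.card) * Pi' := mul_nonneg (Real.sqrt_nonneg _) hPi0
  have hsumxe : ∑ v ∈ Vk, xek v = ∑ v ∈ Vk, uk v := by
    have h : α * (∑ v ∈ Vk, xek v) + ε * ∑ v ∈ Vk, ∑ z ∈ Nk v, (xek v - xek z)
        = α * ∑ v ∈ Vk, uk v := by
      rw [Finset.mul_sum, Finset.mul_sum, Finset.mul_sum, ← Finset.sum_add_distrib]
      exact Finset.sum_congr rfl hxe
    rw [sum_lap_zero Vk Nk hsub hsymm, mul_zero, add_zero] at h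
    exact mul_left_cancel₀ hα0.ne' h
  have hw0 : ∑ v ∈ Vk, w v = 0 := by
    simp only [hw]
    rw [Finset.sum_sub_distrib, Finset.sum_const, nsmul_eq_mul, hsumxe, hub]
    field_simp
    ring
  have hv1 : ∀ v ∈ Vk, α * w v + ε * (∑ z ∈ Nk v, (w v - w z)) = α * (uk v - ub) := by
    intro v hv
    have hLw : ∑ z ∈ Nk v, (w v - w z) = ∑ z ∈ Nk v, (xek v - xek z) :=
      Finset.sum_congr rfl fun z _ => by simp only [hw]; ring
    rw [hLw]
    simp only [hw]
    linear_combination hxe v hv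
  have hq : α * (∑ v ∈ Vk, w v ^ 2) + ε * (∑ v ∈ Vk, w v * ∑ z ∈ Nk v, (w v - w z))
      = α * ∑ v ∈ Vk, (uk v - ub) * w v := by
    rw [Finset.mul_sum, Finset.mul_sum, Finset.mul_sum, ← Finset.sum_add_distrib]
    refine Finset.sum_congr rfl fun v hv => ?_
    linear_combination w v * hv1 v hv
  have hCS : ∑ v ∈ Vk, (uk v - ub) * w v ≤
      Real.sqrt (∑ v ∈ Vk, (uk v - ub) ^ 2) * Real.sqrt (∑ v ∈ Vk, w v ^ 2) :=
    Real.sum_mul_le_sqrt_mul_sqrt Vk _ _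
  have hB : Real.sqrt (∑ v ∈ Vk, (uk v - ub) ^ 2) ≤ Real.sqrt (Vk.card) * Pi' := by
    have h1 : ∑ v ∈ Vk, (uk v - ub) ^ 2 ≤ (Vk.card : ℝ) * Pi' ^ 2 := by
      calc ∑ v ∈ Vk, (uk v - ub) ^ 2 ≤ ∑ v ∈ Vk, Pi' ^ 2 :=
            Finset.sum_le_sum fun v hv => sq_le_sq'
              (neg_le_of_abs_le (hPi v hv)) (le_of_abs_le (hPi v hv))
        _ = (Vk.card : ℝ) * Pi' ^ 2 := by rw [Finset.sum_const, nsmul_eq_mul]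
    calc Real.sqrt (∑ v ∈ Vk, (uk v - ub) ^ 2) ≤ Real.sqrt ((Vk.card : ℝ) * Pi' ^ 2) :=
          Real.sqrt_le_sqrt h1
      _ = Real.sqrt (Vk.card) * Pi' := by
          rw [Real.sqrt_mul (by positivity), Real.sqrt_sq hPi0]
  have hLB := hconn w hw0
  set A : ℝ := ∑ v ∈ Vk, w v ^ 2 with hA
  have hA0 : 0 ≤ A := Finset.sum_nonneg fun _ _ => sq_nonneg _
  have hsA : Real.sqrt A ^ 2 = A := Real.sq_sqrt hA0
  have hmain : (α + ε * lam2) * A ≤ α * (Real.sqrt (Vk.card) * Pi') * Real.sqrt A := by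
    have h2 : ε * (∑ v ∈ Vk, w v * ∑ z ∈ Nk v, (w v - w z)) ≥ ε * (lam2 * A) :=
      mul_le_mul_of_nonneg_left hLB hε.le
    have h3 : α * ∑ v ∈ Vk, (uk v - ub) * w v ≤
        α * ((Real.sqrt (Vk.card) * Pi') * Real.sqrt A) := by
      refine mul_le_mul_of_nonneg_left ?_ hα0.le
      calc ∑ v ∈ Vk, (uk v - ub) * w v ≤
          Real.sqrt (∑ v ∈ Vk, (uk v - ub) ^ 2) * Real.sqrt A := hCS
        _ ≤ (Real.sqrt (Vk.card) * Pi') * Real.sqrt A :=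
            mul_le_mul_of_nonneg_right hB (Real.sqrt_nonneg _)
    nlinarith [hq]
  rcases eq_or_lt_of_le (Real.sqrt_nonneg A) with hz | hz
  · rw [← hz]
    positivity
  · have h4 : (α + ε * lam2) * Real.sqrt A ≤ α * (Real.sqrt (Vk.card) * Pi') := by
      rw [← mul_le_mul_iff_of_pos_right hz]
      calc (α + ε * lam2) * Real.sqrt A * Real.sqrt A
          = (α + ε * lam2) * (Real.sqrt A * Real.sqrt A) := by ring
        _ = (α + ε * lam2) * A := by rw [Real.mul_self_sqrt hA0]
        _ ≤ α * (Real.sqrt (Vk.card) * Pi') * Real.sqrt A := hmain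
    have h5 : α + ε * lam2 = α * (1 + (ε / α) * lam2) := by field_simp
    rw [h5] at h4
    have h6 : (1 + (ε / α) * lam2) * Real.sqrt A ≤ Real.sqrt (Vk.card) * Pi' := by
      refine le_of_mul_le_mul_left ?_ hα0
      calc α * ((1 + (ε / α) * lam2) * Real.sqrt A)
          = α * (1 + (ε / α) * lam2) * Real.sqrt A := by ring
        _ ≤ α * (Real.sqrt (Vk.card) * Pi') := h4
    have h7 : (1:ℝ) / (1 + (ε / α) * lam2) * (Real.sqrt (Vk.card) * Pi')
        = (Real.sqrt (Vk.card) * Pi') / (1 + (ε / α) * lam2) := by ring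
    rw [h7, le_div_iff₀ hc]
    calc Real.sqrt A * (1 + (ε / α) * lam2) = (1 + (ε / α) * lam2) * Real.sqrt A := by ring
      _ ≤ Real.sqrt (Vk.card) * Pi' := h6

set_option maxHeartbeats 1000000 in
/-- Stability of Open Proportional Dynamic Consensus.  The time-varying graph `G_k`
on the agent set `V k` is described by neighborhoods `N k v` (symmetric, irreflexive,
contained in `V k`, with degree at most `1/(2ε)`); `λ̄²` is a uniform lower bound on
the Laplacian quadratic form over zero-sum vectors (algebraic connectivity); the
input disagreement is bounded by `Π` and the variation of the average input by `U`.
Remaining agents apply the proportional dynamic consensus update, arriving agents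
initialize to their input, and `xᵉ_k` solves `(αI + εL_k) xᵉ_k = α u_k` on `V k`,
i.e. `xᵉ_k = (αI + εL_k)⁻¹ (α u_k)`.  Then the trajectory of points of interest is
open stable with the stated stability radius. -/
theorem open_proportional_dynamic_consensus_stability
    (ε α β : ℝ) (hε : 0 < ε) (hα0 : 0 < α) (hα : α < 1 / 2) (hβ : β > 1 - α)
    (V : ℕ → Finset ℤ) (hVne : ∀ k, (V k).Nonempty)
    (hVcard : ∀ k, ((V (k + 1)).card : ℝ) ≥ β ^ 2 * ((V k).card : ℝ))
    (N : ℕ → ℤ → Finset ℤ)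
    (hNsub : ∀ k v, N k v ⊆ V k)
    (hNsymm : ∀ k v w, w ∈ N k v ↔ v ∈ N k w)
    (hNirr : ∀ k v, v ∉ N k v)
    (hdeg : ∀ k, ∀ v ∈ V k, ((N k v).card : ℝ) ≤ 1 / (2 * ε))
    (u : ℕ → ℤ → ℝ) (lam2 : ℝ) (hlam2 : 0 ≤ lam2)
    (hconn : ∀ k, ∀ w : ℤ → ℝ, (∑ v ∈ V k, w v) = 0 →
      (∑ v ∈ V k, w v * (∑ z ∈ N k v, (w v - w z))) ≥ lam2 * ∑ v ∈ V k, (w v) ^ 2)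
    (Pi' U : ℝ)
    (hPi : ∀ k, ∀ v ∈ V k, |u k v - (∑ z ∈ V k, u k z) / ((V k).card : ℝ)| ≤ Pi')
    (hU : ∀ k, openDist (V (k + 1)) (V k)
        (fun _ => (∑ z ∈ V (k + 1), u (k + 1) z) / ((V (k + 1)).card : ℝ))
        (fun _ => (∑ z ∈ V k, u k z) / ((V k).card : ℝ)) ≤
      Real.sqrt ((V (k + 1)).card) * U)
    (x xe : ℕ → ℤ → ℝ)
    (hx_rem : ∀ k, ∀ v ∈ V k ∩ V (k + 1),
      x (k + 1) v =
        x k v - α * (x k v - u k v) - ε * ∑ w ∈ N k v, (x k v - x k w))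
    (hx_arr : ∀ k, ∀ v ∈ V (k + 1) \ V k, x (k + 1) v = u (k + 1) v)
    (hxe : ∀ k, ∀ v ∈ V k,
      α * xe k v + ε * (∑ w ∈ N k v, (xe k v - xe k w)) = α * u k v) :
    ∀ ε' > ((1 + 2 / (1 + (ε / α) * lam2) + (1 / β) * (1 / (1 + (ε / α) * lam2))) * Pi'
          + U) / (1 - (1 - α) / β),
      ∃ δ > 0, openDist (V 0) (V 0) (x 0) (xe 0) / Real.sqrt ((V 0).card) < δ →
        ∀ k, openDist (V k) (V k) (x k) (xe k) / Real.sqrt ((V k).card) < ε' := by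
  -- basic constants
  have h1α : (0:ℝ) < 1 - α := by linarith
  have hβ0 : (0:ℝ) < β := by linarith
  have hc : (0:ℝ) < 1 + (ε / α) * lam2 := by positivity
  have hcard : ∀ k, (0:ℝ) < ((V k).card : ℝ) := fun k => by
    exact_mod_cast Finset.card_pos.2 (hVne k)
  have hsn : ∀ k, 0 < Real.sqrt ((V k).card) := fun k => Real.sqrt_pos.2 (hcard k)
  have hPi0 : 0 ≤ Pi' :=
    le_trans (abs_nonneg _) (hPi 0 (hVne 0).choose (hVne 0).choose_spec)
  have hU0 : 0 ≤ U := by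
    have h1 : (0:ℝ) ≤ Real.sqrt ((V 1).card) * U :=
      le_trans (Real.sqrt_nonneg _) (hU 0)
    nlinarith [hsn 1]
  set c1 : ℝ := 1 / (1 + (ε / α) * lam2) with hc1def
  have hc10 : 0 ≤ c1 := by rw [hc1def]; positivity
  set ρ : ℝ := (1 - α) / β with hρdef
  have hρ0 : 0 < ρ := div_pos h1α hβ0
  have hρ1 : ρ < 1 := (div_lt_one hβ0).2 (by linarith)
  -- the open distance on identical vertex sets is just the ℓ² distance
  have hod : ∀ k, openDist (V k) (V k) (x k) (xe k) =
      Real.sqrt (∑ v ∈ V k, (x k v - xe k v) ^ 2) := by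
    intro k
    simp only [openDist, Finset.inter_self, Finset.sdiff_self,
      Finset.sum_empty, add_zero]
  -- one-step recursion
  have hstep : ∀ k,
      Real.sqrt (∑ v ∈ V (k+1), (x (k+1) v - xe (k+1) v) ^ 2) / Real.sqrt ((V (k+1)).card)
        ≤ ρ * (Real.sqrt (∑ v ∈ V k, (x k v - xe k v) ^ 2) / Real.sqrt ((V k).card))
          + (Pi' + c1 * Pi' + U + (1 / β) * (c1 * Pi')) := by
    intro k
    have hUk := hU k
    set ubk : ℝ := (∑ z ∈ V k, u k z) / (((V k).card : ℝ)) with hubk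
    set ubk' : ℝ := (∑ z ∈ V (k+1), u (k+1) z) / (((V (k+1)).card : ℝ)) with hubk'
    set A : ℤ → ℝ := fun v => if v ∈ V k then
      (1 - α) * (x k v - xe k v)
        - ε * ∑ z ∈ N k v, ((x k v - xe k v) - (x k z - xe k z)) else 0 with hA
    set B1 : ℤ → ℝ := fun v => if v ∈ V k then xe k v - ubk else 0 with hB1
    set B2 : ℤ → ℝ := fun v => if v ∈ V k then ubk - ubk' else 0 with hB2
    set B3 : ℤ → ℝ := fun v => ubk' - xe (k+1) v with hB3
    set Cc : ℤ → ℝ := fun v => if v ∈ V k then 0 else u (k+1) v - ubk' with hCc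
    -- pointwise decomposition of the error
    have hdecomp : ∀ v ∈ V (k+1),
        x (k+1) v - xe (k+1) v = A v + B1 v + B2 v + B3 v + Cc v := by
      intro v hv
      by_cases hvk : v ∈ V k
      · simp only [hA, hB1, hB2, hB3, hCc, if_pos hvk]
        rw [hx_rem k v (Finset.mem_inter.2 ⟨hvk, hv⟩)]
        have hsplit : ∑ z ∈ N k v, ((x k v - xe k v) - (x k z - xe k z))
            = (∑ z ∈ N k v, (x k v - x k z)) - ∑ z ∈ N k v, (xe k v - xe k z) := by
          rw [← Finset.sum_sub_distrib]
          exact Finset.sum_congr rfl fun z _ => by ring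
        rw [hsplit]
        linear_combination - hxe k v hvk
      · simp only [hA, hB1, hB2, hB3, hCc, if_neg hvk]
        rw [hx_arr k v (Finset.mem_sdiff.2 ⟨hv, hvk⟩)]
        ring
    have hsum_eq : ∑ v ∈ V (k+1), (x (k+1) v - xe (k+1) v) ^ 2
        = ∑ v ∈ V (k+1), (A v + B1 v + B2 v + B3 v + Cc v) ^ 2 :=
      Finset.sum_congr rfl fun v hv => by rw [hdecomp v hv]
    -- triangle inequalities
    have t1 : Real.sqrt (∑ v ∈ V (k+1), (A v + B1 v) ^ 2) ≤
        Real.sqrt (∑ v ∈ V (k+1), (A v) ^ 2) + Real.sqrt (∑ v ∈ V (k+1), (B1 v) ^ 2) :=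
      enorm_triangle _ A B1
    have t2 : Real.sqrt (∑ v ∈ V (k+1), (A v + B1 v + B2 v) ^ 2) ≤
        Real.sqrt (∑ v ∈ V (k+1), (A v + B1 v) ^ 2)
          + Real.sqrt (∑ v ∈ V (k+1), (B2 v) ^ 2) :=
      enorm_triangle _ (fun v => A v + B1 v) B2
    have t3 : Real.sqrt (∑ v ∈ V (k+1), (A v + B1 v + B2 v + B3 v) ^ 2) ≤
        Real.sqrt (∑ v ∈ V (k+1), (A v + B1 v + B2 v) ^ 2)
          + Real.sqrt (∑ v ∈ V (k+1), (B3 v) ^ 2) :=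
      enorm_triangle _ (fun v => A v + B1 v + B2 v) B3
    have t4 : Real.sqrt (∑ v ∈ V (k+1), (A v + B1 v + B2 v + B3 v + Cc v) ^ 2) ≤
        Real.sqrt (∑ v ∈ V (k+1), (A v + B1 v + B2 v + B3 v) ^ 2)
          + Real.sqrt (∑ v ∈ V (k+1), (Cc v) ^ 2) :=
      enorm_triangle _ (fun v => A v + B1 v + B2 v + B3 v) Cc
    -- bound on A : contraction
    have bA : Real.sqrt (∑ v ∈ V (k+1), (A v) ^ 2) ≤
        (1 - α) * Real.sqrt (∑ v ∈ V k, (x k v - xe k v) ^ 2) := by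
      have hAsq : ∑ v ∈ V (k+1), (A v) ^ 2
          = ∑ v ∈ V (k+1) ∩ V k, ((1 - α) * (x k v - xe k v)
              - ε * ∑ z ∈ N k v, ((x k v - xe k v) - (x k z - xe k z))) ^ 2 := by
        have hcong : ∀ v ∈ V (k+1), (A v) ^ 2 = if v ∈ V k then
            ((1 - α) * (x k v - xe k v)
              - ε * ∑ z ∈ N k v, ((x k v - xe k v) - (x k z - xe k z))) ^ 2 else 0 := by
          intro v _
          by_cases h : v ∈ V k <;> simp [hA, h]
        rw [Finset.sum_congr rfl hcong, Finset.sum_ite_mem]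
      rw [hAsq]
      have hcontr := contraction ε α hε hα (V k) (N k) (hNsub k) (hNsymm k) (hNirr k)
        (hdeg k) (fun v => x k v - xe k v) (V (k+1) ∩ V k) Finset.inter_subset_right
      calc Real.sqrt (∑ v ∈ V (k+1) ∩ V k, ((1 - α) * (x k v - xe k v)
              - ε * ∑ z ∈ N k v, ((x k v - xe k v) - (x k z - xe k z))) ^ 2)
          ≤ Real.sqrt ((1 - α) ^ 2 * ∑ v ∈ V k, (x k v - xe k v) ^ 2) :=
            Real.sqrt_le_sqrt hcontr
        _ = (1 - α) * Real.sqrt (∑ v ∈ V k, (x k v - xe k v) ^ 2) := by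
            rw [Real.sqrt_mul (sq_nonneg _), Real.sqrt_sq h1α.le]
    -- bound on B1 : tracking at time k
    have htrk := tracking ε α lam2 Pi' hε hα0 hlam2 (V k) (hVne k) (N k) (hNsub k)
      (hNsymm k) (u k) (xe k) (hconn k) (hPi k) (hxe k)
    have bB1 : Real.sqrt (∑ v ∈ V (k+1), (B1 v) ^ 2) ≤
        c1 * (Real.sqrt ((V k).card) * Pi') := by
      have hB1sq : ∑ v ∈ V (k+1), (B1 v) ^ 2
          = ∑ v ∈ V (k+1) ∩ V k, (xe k v - ubk) ^ 2 := by
        have hcong : ∀ v ∈ V (k+1), (B1 v) ^ 2 =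
            if v ∈ V k then (xe k v - ubk) ^ 2 else 0 := by
          intro v _
          by_cases h : v ∈ V k <;> simp [hB1, h]
        rw [Finset.sum_congr rfl hcong, Finset.sum_ite_mem]
      rw [hB1sq]
      calc Real.sqrt (∑ v ∈ V (k+1) ∩ V k, (xe k v - ubk) ^ 2)
          ≤ Real.sqrt (∑ v ∈ V k, (xe k v - ubk) ^ 2) :=
            Real.sqrt_le_sqrt (Finset.sum_le_sum_of_subset_of_nonneg
              Finset.inter_subset_right fun _ _ _ => sq_nonneg _)
        _ ≤ c1 * (Real.sqrt ((V k).card) * Pi') := htrk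
    -- bound on B2 : average input variation
    have bB2 : Real.sqrt (∑ v ∈ V (k+1), (B2 v) ^ 2) ≤
        Real.sqrt ((V (k+1)).card) * U := by
      have hB2sq : ∑ v ∈ V (k+1), (B2 v) ^ 2
          = ∑ v ∈ V (k+1) ∩ V k, (ubk' - ubk) ^ 2 := by
        have hcong : ∀ v ∈ V (k+1), (B2 v) ^ 2 =
            if v ∈ V k then (ubk' - ubk) ^ 2 else 0 := by
          intro v _
          by_cases h : v ∈ V k
          · simp only [hB2, if_pos h]; ring
          · simp [hB2, h]
        rw [Finset.sum_congr rfl hcong, Finset.sum_ite_mem]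
      rw [hB2sq]
      simp only [openDist] at hUk
      calc Real.sqrt (∑ v ∈ V (k+1) ∩ V k, (ubk' - ubk) ^ 2)
          ≤ Real.sqrt ((∑ v ∈ V (k+1) ∩ V k, (ubk' - ubk) ^ 2)
              + (∑ v ∈ V (k+1) \ V k, ubk' ^ 2) + (∑ v ∈ V k \ V (k+1), ubk ^ 2)) := by
            apply Real.sqrt_le_sqrt
            have h1 : (0:ℝ) ≤ ∑ v ∈ V (k+1) \ V k, ubk' ^ 2 :=
              Finset.sum_nonneg fun _ _ => sq_nonneg _
            have h2 : (0:ℝ) ≤ ∑ v ∈ V k \ V (k+1), ubk ^ 2 :=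
              Finset.sum_nonneg fun _ _ => sq_nonneg _
            linarith
        _ ≤ Real.sqrt ((V (k+1)).card) * U := hUk
    -- bound on B3 : tracking at time k+1
    have htrk' := tracking ε α lam2 Pi' hε hα0 hlam2 (V (k+1)) (hVne (k+1)) (N (k+1))
      (hNsub (k+1)) (hNsymm (k+1)) (u (k+1)) (xe (k+1)) (hconn (k+1)) (hPi (k+1))
      (hxe (k+1))
    have bB3 : Real.sqrt (∑ v ∈ V (k+1), (B3 v) ^ 2) ≤
        c1 * (Real.sqrt ((V (k+1)).card) * Pi') := by
      have hB3sq : ∑ v ∈ V (k+1), (B3 v) ^ 2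
          = ∑ v ∈ V (k+1), (xe (k+1) v - ubk') ^ 2 :=
        Finset.sum_congr rfl fun v _ => by simp only [hB3]; ring
      rw [hB3sq]
      exact htrk'
    -- bound on C : arriving agents
    have bC : Real.sqrt (∑ v ∈ V (k+1), (Cc v) ^ 2) ≤
        Real.sqrt ((V (k+1)).card) * Pi' := by
      have h1 : ∑ v ∈ V (k+1), (Cc v) ^ 2 ≤ ((V (k+1)).card : ℝ) * Pi' ^ 2 := by
        calc ∑ v ∈ V (k+1), (Cc v) ^ 2 ≤ ∑ v ∈ V (k+1), Pi' ^ 2 := by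
              refine Finset.sum_le_sum fun v hv => ?_
              by_cases h : v ∈ V k
              · simp [hCc, h]
                positivity
              · simp only [hCc, if_neg h]
                exact sq_le_sq' (neg_le_of_abs_le (hPi (k+1) v hv))
                  (le_of_abs_le (hPi (k+1) v hv))
          _ = ((V (k+1)).card : ℝ) * Pi' ^ 2 := by
              rw [Finset.sum_const, nsmul_eq_mul]
      calc Real.sqrt (∑ v ∈ V (k+1), (Cc v) ^ 2)
          ≤ Real.sqrt (((V (k+1)).card : ℝ) * Pi' ^ 2) := Real.sqrt_le_sqrt h1
        _ = Real.sqrt ((V (k+1)).card) * Pi' := by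
            rw [Real.sqrt_mul (by positivity), Real.sqrt_sq hPi0]
    -- assemble the ℓ² bound
    have hfive : Real.sqrt (∑ v ∈ V (k+1), (x (k+1) v - xe (k+1) v) ^ 2) ≤
        (1 - α) * Real.sqrt (∑ v ∈ V k, (x k v - xe k v) ^ 2)
          + c1 * (Real.sqrt ((V k).card) * Pi')
          + Real.sqrt ((V (k+1)).card) * U
          + c1 * (Real.sqrt ((V (k+1)).card) * Pi')
          + Real.sqrt ((V (k+1)).card) * Pi' := by
      rw [hsum_eq]
      linarith [t1, t2, t3, t4, bA, bB1, bB2, bB3, bC]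
    -- divide by √|V_{k+1}|
    have hβsn : β * Real.sqrt ((V k).card) ≤ Real.sqrt ((V (k+1)).card) := by
      have h := Real.sqrt_le_sqrt (hVcard k)
      rwa [Real.sqrt_mul (sq_nonneg β), Real.sqrt_sq hβ0.le] at h
    have hE0 : 0 ≤ Real.sqrt (∑ v ∈ V k, (x k v - xe k v) ^ 2) := Real.sqrt_nonneg _
    have hsn' := hsn (k+1)
    have hsnk := hsn k
    have hquot : Real.sqrt (∑ v ∈ V (k+1), (x (k+1) v - xe (k+1) v) ^ 2)
          / Real.sqrt ((V (k+1)).card) ≤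
        ((1 - α) * Real.sqrt (∑ v ∈ V k, (x k v - xe k v) ^ 2)
          + c1 * (Real.sqrt ((V k).card) * Pi')
          + Real.sqrt ((V (k+1)).card) * U
          + c1 * (Real.sqrt ((V (k+1)).card) * Pi')
          + Real.sqrt ((V (k+1)).card) * Pi') / Real.sqrt ((V (k+1)).card) :=
      (div_le_div_iff_of_pos_right hsn').2 hfive
    rw [add_div, add_div, add_div, add_div] at hquot
    -- simplify the individual quotients
    have e3 : Real.sqrt ((V (k+1)).card) * U / Real.sqrt ((V (k+1)).card) = U := by
      rw [mul_comm, mul_div_assoc, div_self hsn'.ne', mul_one]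
    have e4 : c1 * (Real.sqrt ((V (k+1)).card) * Pi') / Real.sqrt ((V (k+1)).card)
        = c1 * Pi' := by
      rw [show c1 * (Real.sqrt ((V (k+1)).card) * Pi')
          = (c1 * Pi') * Real.sqrt ((V (k+1)).card) by ring,
        mul_div_assoc, div_self hsn'.ne', mul_one]
    have e5 : Real.sqrt ((V (k+1)).card) * Pi' / Real.sqrt ((V (k+1)).card) = Pi' := by
      rw [mul_comm, mul_div_assoc, div_self hsn'.ne', mul_one]
    have e1 : (1 - α) * Real.sqrt (∑ v ∈ V k, (x k v - xe k v) ^ 2)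
          / Real.sqrt ((V (k+1)).card) ≤
        ρ * (Real.sqrt (∑ v ∈ V k, (x k v - xe k v) ^ 2) / Real.sqrt ((V k).card)) := by
      have heq : ρ * (Real.sqrt (∑ v ∈ V k, (x k v - xe k v) ^ 2) / Real.sqrt ((V k).card))
          = (1 - α) * Real.sqrt (∑ v ∈ V k, (x k v - xe k v) ^ 2)
            / (β * Real.sqrt ((V k).card)) := by
        rw [hρdef, div_mul_div_comm]
      rw [heq]
      exact div_le_div_of_nonneg_left (by positivity) (by positivity) hβsn
    have e2 : c1 * (Real.sqrt ((V k).card) * Pi') / Real.sqrt ((V (k+1)).card) ≤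
        (1 / β) * (c1 * Pi') := by
      have heq : (1 / β) * (c1 * Pi')
          = c1 * (Real.sqrt ((V k).card) * Pi') / (β * Real.sqrt ((V k).card)) := by
        field_simp
      rw [heq]
      exact div_le_div_of_nonneg_left (by positivity) (by positivity) hβsn
    rw [e3, e4, e5] at hquot
    linarith [hquot, e1, e2]
  -- conclusion by induction
  intro ε' hε'
  have h1ρ : (0:ℝ) < 1 - ρ := by linarith
  have hnum0 : 0 ≤ (1 + 2 / (1 + (ε / α) * lam2) + (1 / β) * c1) * Pi' + U := by
    have h1 : (0:ℝ) ≤ 2 / (1 + (ε / α) * lam2) := div_nonneg (by norm_num) hc.le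
    have h2 : (0:ℝ) ≤ (1 / β) * c1 :=
      mul_nonneg (div_nonneg zero_le_one hβ0.le) hc10
    have h3 : (0:ℝ) ≤ 1 + 2 / (1 + (ε / α) * lam2) + (1 / β) * c1 := by linarith
    have := mul_nonneg h3 hPi0
    linarith
  have hε'pos : 0 < ε' :=
    lt_of_le_of_lt (div_nonneg hnum0 h1ρ.le) hε'
  refine ⟨ε', hε'pos, ?_⟩
  intro hd0 k
  have hnum : (1 + 2 / (1 + (ε / α) * lam2) + (1 / β) * c1) * Pi' + U < ε' * (1 - ρ) :=
    (div_lt_iff₀ h1ρ).1 hε'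
  have hc1eq : 2 / (1 + (ε / α) * lam2) = 2 * c1 := by rw [hc1def]; ring
  rw [hc1eq] at hnum
  induction k with
  | zero => exact hd0
  | succ k ih =>
    rw [hod (k+1)]
    rw [hod k] at ih
    have hsk := hstep k
    have hmono : ρ * (Real.sqrt (∑ v ∈ V k, (x k v - xe k v) ^ 2)
        / Real.sqrt ((V k).card)) ≤ ρ * ε' :=
      mul_le_mul_of_nonneg_left ih.le hρ0.le
    have hcoef : Pi' + c1 * Pi' + U + (1 / β) * (c1 * Pi') ≤
        (1 + 2 * c1 + (1 / β) * c1) * Pi' + U := by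
      have hid : (1 + 2 * c1 + (1 / β) * c1) * Pi' + U
          - (Pi' + c1 * Pi' + U + (1 / β) * (c1 * Pi')) = c1 * Pi' := by ring
      linarith [mul_nonneg hc10 hPi0, hid]
    have hsplit : ρ * ε' + ε' * (1 - ρ) = ε' := by ring
    linarith [hsk, hmono, hnum, hcoef, hsplit]
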